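/- Let T be a trivalent tree with leaf set [n] rooted at r, and consider the monomial parametrization κ_I = ¼(1−μ̄_{r(I)}²) ∏_{v ∈ int(V(I))} μ̄_v^{deg(v)−2} ∏_{(u,v)∈E(I)} η_{u,v} for I ⊆ [n], |I| ≥ 2 (parameters μ̄_v ∈ [−1,1], η_{u,v} ∈ R). Then for every edge split A|B of [n] and all nonempty I1, I2 ⊆ A, J1, J2 ⊆ B: κ_{I1∪J1} κ_{I2∪J2} = κ_{I1∪J2} κ_{I2∪J1}. -/

import Mathlib

set_option maxHeartbeats 1600000
set_option linter.unusedSectionVars false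


open Finset

variable {V : Type*} [Fintype V] [DecidableEq V] [LinearOrder V]

/-- `E(I)`: edge set of the minimal subtree `T(I)` spanning the leaves in `I`, given a
choice `pth` of (the unique) paths between vertices. -/
def spanEdges {G : SimpleGraph V} (pth : ∀ u v : V, G.Walk u v) {n : ℕ}
    (ℓ : Fin n → V) (I : Finset (Fin n)) : Finset (Sym2 V) :=
  I.biUnion fun i => I.biUnion fun j => (pth (ℓ i) (ℓ j)).edges.toFinset

/-- `V(I)`: vertex set of the minimal subtree `T(I)`. -/
def spanVerts {G : SimpleGraph V} (pth : ∀ u v : V, G.Walk u v) {n : ℕ}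
    (ℓ : Fin n → V) (I : Finset (Fin n)) : Finset V :=
  I.biUnion fun i => I.biUnion fun j => (pth (ℓ i) (ℓ j)).support.toFinset

/-- Degree of a vertex in `T(I)`. -/
def spanDeg {G : SimpleGraph V} (pth : ∀ u v : V, G.Walk u v) {n : ℕ}
    (ℓ : Fin n → V) (I : Finset (Fin n)) (v : V) : ℕ :=
  ((spanEdges pth ℓ I).filter fun e => v ∈ e).card

/-- `int(V(I))`: the inner (non-leaf) nodes of `T(I)`. -/
def spanInner {G : SimpleGraph V} (pth : ∀ u v : V, G.Walk u v) {n : ℕ}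
    (ℓ : Fin n → V) (I : Finset (Fin n)) : Finset V :=
  (spanVerts pth ℓ I).filter fun v => 2 ≤ spanDeg pth ℓ I v

/-- `r(I)`: the root of `T^r(I)`, i.e. the vertex of `T(I)` closest to `r`; it is the
unique vertex of `T(I)` lying on every path from `r` to a leaf in `I`. -/
def spanRoot {G : SimpleGraph V} (r : V) (pth : ∀ u v : V, G.Walk u v) {n : ℕ}
    (ℓ : Fin n → V) (I : Finset (Fin n)) : V :=
  let s := (spanVerts pth ℓ I).filter fun v => ∀ i ∈ I, v ∈ (pth r (ℓ i)).support
  if h : s.Nonempty then s.min' h else r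


section EdgeSplitAux
open SimpleGraph


lemma walk_unique {G : SimpleGraph V} (hT : G.IsAcyclic) {u v : V}
    (p q : G.Walk u v) (hp : p.IsPath) (hq : q.IsPath) : p = q :=
  congrArg Subtype.val (hT.path_unique ⟨p, hp⟩ ⟨q, hq⟩)

lemma path_edges_subset {G : SimpleGraph V} (hT : G.IsAcyclic) {u v : V}
    (p : G.Walk u v) (hp : p.IsPath) (W : G.Walk u v) : ∀ f ∈ p.edges, f ∈ W.edges := by
  have h : p = W.bypass := walk_unique hT p W.bypass hp W.bypass_isPath
  intro f hf
  exact W.edges_bypass_subset (h ▸ hf)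

lemma path_support_subset {G : SimpleGraph V} (hT : G.IsAcyclic) {u v : V}
    (p : G.Walk u v) (hp : p.IsPath) (W : G.Walk u v) : ∀ x ∈ p.support, x ∈ W.support := by
  have h : p = W.bypass := walk_unique hT p W.bypass hp W.bypass_isPath
  intro f hf
  exact W.support_bypass_subset (h ▸ hf)

lemma bridge_mem {G : SimpleGraph V} (hT : G.IsAcyclic) {w w' : V} (h : G.Adj w w')
    (W : G.Walk w w') : s(w, w') ∈ W.edges := by
  have hb : G.IsBridge s(w, w') := isAcyclic_iff_forall_edge_isBridge.mp hT h
  rw [isBridge_iff_adj_and_forall_walk_mem_edges] at hb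
  exact hb W

lemma walk_split {G : SimpleGraph V} {u v : V} (p : G.Walk u v) (hp : p.IsPath)
    (e : Sym2 V) (he : e ∈ p.edges) :
    ∃ (w w' : V) (p₁ : G.Walk u w) (p₂ : G.Walk w' v),
      e = s(w, w') ∧ p₁.IsPath ∧ p₂.IsPath ∧
      p.edges = p₁.edges ++ e :: p₂.edges ∧
      p.support = p₁.support ++ p₂.support := by
  induction p with
  | nil => simp at he
  | cons h q ih =>
    rename_i a b c
    rw [SimpleGraph.Walk.edges_cons, List.mem_cons] at he
    rcases he with he | he
    · exact ⟨a, b, SimpleGraph.Walk.nil, q, he, SimpleGraph.Walk.IsPath.nil,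
        hp.of_cons, by simp [he], by simp⟩
    · obtain ⟨w, w', q₁, q₂, heq, hq₁, hq₂, hedges, hsupp⟩ :=
        ih ((SimpleGraph.Walk.cons_isPath_iff _ _).mp hp).1 he
      refine ⟨w, w', SimpleGraph.Walk.cons h q₁, q₂, heq, ?_, hq₂, ?_, ?_⟩
      · rw [SimpleGraph.Walk.cons_isPath_iff]
        refine ⟨hq₁, fun hmem => ?_⟩
        have : a ∈ q.support := by
          rw [hsupp]; exact List.mem_append_left _ hmem
        exact ((SimpleGraph.Walk.cons_isPath_iff _ _).mp hp).2 this
      · simp [hedges]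
      · simp [hsupp]

lemma pth_symm {G : SimpleGraph V} (hT : G.IsAcyclic)
    (pth : ∀ u v : V, G.Walk u v) (hpth : ∀ u v, (pth u v).IsPath) (u v : V) :
    pth v u = (pth u v).reverse :=
  walk_unique hT _ _ (hpth v u) ((hpth u v).reverse)

lemma mem_edges_symm {G : SimpleGraph V} (hT : G.IsAcyclic)
    (pth : ∀ u v : V, G.Walk u v) (hpth : ∀ u v, (pth u v).IsPath) (u v : V)
    {f : Sym2 V} (h : f ∈ (pth u v).edges) : f ∈ (pth v u).edges := by
  rw [pth_symm hT pth hpth u v]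
  simpa using h

lemma mem_support_symm {G : SimpleGraph V} (hT : G.IsAcyclic)
    (pth : ∀ u v : V, G.Walk u v) (hpth : ∀ u v, (pth u v).IsPath) (u v : V)
    {x : V} (h : x ∈ (pth u v).support) : x ∈ (pth v u).support := by
  rw [pth_symm hT pth hpth u v]
  simpa using h

lemma pth_split {G : SimpleGraph V} (hT : G.IsAcyclic)
    (pth : ∀ u v : V, G.Walk u v) (hpth : ∀ u v, (pth u v).IsPath) {u v : V}
    {e : Sym2 V} (he : e ∈ (pth u v).edges) :
    ∃ w w', e = s(w, w') ∧ G.Adj w w' ∧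
      (pth u v).edges = (pth u w).edges ++ e :: (pth w' v).edges ∧
      (pth u v).support = (pth u w).support ++ (pth w' v).support ∧
      e ∉ (pth u w).edges ∧ e ∉ (pth w' v).edges := by
  obtain ⟨w, w', q₁, q₂, heq, hq₁, hq₂, hedges, hsupp⟩ :=
    walk_split (pth u v) (hpth u v) e he
  have e1 : q₁ = pth u w := walk_unique hT _ _ hq₁ (hpth u w)
  have e2 : q₂ = pth w' v := walk_unique hT _ _ hq₂ (hpth w' v)
  subst e1; subst e2
  have hadj : G.Adj w w' := (pth u v).adj_of_mem_edges (heq ▸ he)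
  have hnd := (hpth u v).edges_nodup
  rw [hedges, List.nodup_append'] at hnd
  refine ⟨w, w', heq, hadj, hedges, hsupp, fun hm => hnd.2.2 hm List.mem_cons_self,
    (List.nodup_cons.mp hnd.2.1).1⟩

lemma not_both {G : SimpleGraph V} (hT : G.IsAcyclic)
    (pth : ∀ u v : V, G.Walk u v) (hpth : ∀ u v, (pth u v).IsPath)
    {e : Sym2 V} (u a b : V) (hab : e ∈ (pth a b).edges)
    (h1 : e ∈ (pth u a).edges) (h2 : e ∈ (pth u b).edges) : False := by
  obtain ⟨w1, w1', heq1, hadj1, _, _, hn1, hn1'⟩ := pth_split hT pth hpth h1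
  obtain ⟨w2, w2', heq2, _, _, _, hn2, hn2'⟩ := pth_split hT pth hpth h2
  have hee : s(w1, w1') = s(w2, w2') := heq1 ▸ heq2
  rw [Sym2.eq_iff] at hee
  rcases hee with ⟨hw, hw'⟩ | ⟨hw, hw'⟩
  · subst hw; subst hw'
    have : e ∈ ((pth w1' a).reverse.append (pth w1' b)).edges :=
      path_edges_subset hT (pth a b) (hpth a b) _ e hab
    rw [SimpleGraph.Walk.edges_append, List.mem_append, SimpleGraph.Walk.edges_reverse,
      List.mem_reverse] at this
    tauto
  · have hb : s(w1, w1') ∈ ((pth u w1).reverse.append (pth u w1')).edges :=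
      bridge_mem hT hadj1 _
    rw [SimpleGraph.Walk.edges_append, List.mem_append, SimpleGraph.Walk.edges_reverse,
      List.mem_reverse, ← heq1] at hb
    rcases hb with h | h
    · exact hn1 h
    · exact hn2 (hw' ▸ h)

lemma mem_support_of_mem_edge {G : SimpleGraph V} {u v : V} (p : G.Walk u v)
    {f : Sym2 V} (hf : f ∈ p.edges) {x : V} (hx : x ∈ f) : x ∈ p.support := by
  induction f with
  | h a b =>
    rcases Sym2.mem_iff.mp hx with h | h
    · subst h; exact p.fst_mem_support_of_mem_edges hf
    · subst h; exact p.snd_mem_support_of_mem_edges hf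

lemma spanRoot_congr {G : SimpleGraph V} (r : V) (pth : ∀ u v : V, G.Walk u v) {n : ℕ}
    (ℓ : Fin n → V) (K K' : Finset (Fin n))
    (h : (spanVerts pth ℓ K).filter (fun v => ∀ i ∈ K, v ∈ (pth r (ℓ i)).support) =
      (spanVerts pth ℓ K').filter (fun v => ∀ i ∈ K', v ∈ (pth r (ℓ i)).support)) :
    spanRoot r pth ℓ K = spanRoot r pth ℓ K' := by
  simp only [spanRoot]
  rw [h]

/-- one-sided edge set -/
def TAe {G : SimpleGraph V} (pth : ∀ u v : V, G.Walk u v) {n : ℕ}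
    (ℓ : Fin n → V) (w : V) (I : Finset (Fin n)) : Finset (Sym2 V) :=
  I.biUnion fun i => (pth (ℓ i) w).edges.toFinset

/-- one-sided vertex set -/
def TAv {G : SimpleGraph V} (pth : ∀ u v : V, G.Walk u v) {n : ℕ}
    (ℓ : Fin n → V) (w : V) (I : Finset (Fin n)) : Finset V :=
  I.biUnion fun i => (pth (ℓ i) w).support.toFinset

/-- one-sided degree -/
def dside {G : SimpleGraph V} (pth : ∀ u v : V, G.Walk u v) {n : ℕ}
    (ℓ : Fin n → V) (w : V) (e : Sym2 V) (I : Finset (Fin n)) (v : V) : ℕ :=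
  ((TAe pth ℓ w I).filter fun f => v ∈ f).card + (if v ∈ e then 1 else 0)

lemma aux_factor {G : SimpleGraph V} (hT : G.IsTree)
    (r : V) {n : ℕ} (ℓ : Fin n → V)
    (pth : ∀ u v : V, G.Walk u v) (hpth : ∀ u v, (pth u v).IsPath)
    (mbar : V → ℝ) (η : Sym2 V → ℝ)
    (κ : Finset (Fin n) → ℝ)
    (hκ : ∀ I : Finset (Fin n), 2 ≤ I.card →
      κ I = 1 / 4 * (1 - mbar (spanRoot r pth ℓ I) ^ 2) *
        (∏ v ∈ spanInner pth ℓ I, mbar v ^ (spanDeg pth ℓ I v - 2)) *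
        ∏ e ∈ spanEdges pth ℓ I, η e)
    (e : Sym2 V)
    (A B : Finset (Fin n)) (hdisj : Disjoint A B)
    (hsplit : ∀ i ∈ A, ∀ j ∈ B, e ∈ (pth (ℓ i) (ℓ j)).edges)
    (hsplitA : ∀ i ∈ A, ∀ j ∈ A, e ∉ (pth (ℓ i) (ℓ j)).edges)
    (hsplitB : ∀ i ∈ B, ∀ j ∈ B, e ∉ (pth (ℓ i) (ℓ j)).edges)
    (I1 I2 J1 J2 : Finset (Fin n))
    (hI1 : I1.Nonempty) (hI2 : I2.Nonempty) (hJ1 : J1.Nonempty) (hJ2 : J2.Nonempty)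
    (hI1A : I1 ⊆ A) (hI2A : I2 ⊆ A) (hJ1B : J1 ⊆ B) (hJ2B : J2 ⊆ B)
    (hrA : ∃ i ∈ A, e ∉ (pth r (ℓ i)).edges) :
    κ (I1 ∪ J1) * κ (I2 ∪ J2) = κ (I1 ∪ J2) * κ (I2 ∪ J1) := by
  classical
  obtain ⟨i₀, hi₀A, hre⟩ := hrA
  obtain ⟨j₀, hj₀⟩ := hJ1.exists_mem
  have hj₀B : j₀ ∈ B := hJ1B hj₀
  have hac : G.IsAcyclic := hT.IsAcyclic
  obtain ⟨w, w', heq, hadj, hed₀, hsup₀, hn₁, hn₂⟩ :=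
    pth_split hac pth hpth (hsplit i₀ hi₀A j₀ hj₀B)
  have heww' : e ∈ (pth w w').edges := by
    have := bridge_mem hac hadj (pth w w'); rwa [← heq] at this
  have hSAw : e ∉ (pth w w).edges := by
    have h0 : pth w w = Walk.nil := walk_unique hac _ _ (hpth w w) Walk.IsPath.nil
    simp [h0]
  have hSBw' : e ∉ (pth w' w').edges := by
    have h0 : pth w' w' = Walk.nil := walk_unique hac _ _ (hpth w' w') Walk.IsPath.nil
    simp [h0]
  have hxor2 : ∀ v, e ∉ (pth v w).edges → e ∉ (pth v w').edges → False := by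
    intro v h1 h2
    have hb := bridge_mem hac hadj ((pth v w).reverse.append (pth v w'))
    rw [Walk.edges_append, List.mem_append, Walk.edges_reverse, List.mem_reverse, ← heq] at hb
    tauto
  have hxor1 : ∀ v, e ∈ (pth v w).edges → e ∉ (pth v w').edges := fun v h1 h2 =>
    not_both hac pth hpth v w w' heww' h1 h2
  have hxor1' : ∀ v, e ∈ (pth v w').edges → e ∉ (pth v w).edges := fun v h1 h2 =>
    not_both hac pth hpth v w w' heww' h2 h1
  have h5a : ∀ u x, e ∉ (pth u w).edges → e ∉ (pth x w).edges → e ∉ (pth u x).edges := by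
    intro u x hu hx hux
    obtain ⟨y, y', heq', _, _, _, hp₁, hp₂⟩ := pth_split hac pth hpth hux
    have hee : s(w, w') = s(y, y') := heq ▸ heq'
    rw [Sym2.eq_iff] at hee
    rcases hee with ⟨hy, hy'⟩ | ⟨hy, hy'⟩
    · subst hy; subst hy'
      exact hxor2 x hx fun hm => hp₂ (mem_edges_symm hac pth hpth x w' hm)
    · subst hy; subst hy'
      exact hxor2 u hu hp₁
  have h5b : ∀ u x, e ∉ (pth u w').edges → e ∉ (pth x w').edges → e ∉ (pth u x).edges := by
    intro u x hu hx hux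
    obtain ⟨y, y', heq', _, _, _, hp₁, hp₂⟩ := pth_split hac pth hpth hux
    have hee : s(w, w') = s(y, y') := heq ▸ heq'
    rw [Sym2.eq_iff] at hee
    rcases hee with ⟨hy, hy'⟩ | ⟨hy, hy'⟩
    · subst hy; subst hy'
      exact hxor2 u hp₁ hu
    · subst hy; subst hy'
      exact hxor2 x (fun hm => hp₂ (mem_edges_symm hac pth hpth x w hm)) hx
  have h5c : ∀ u x, e ∉ (pth u w).edges → e ∉ (pth x w').edges → e ∈ (pth u x).edges := by
    intro u x hu hx
    by_contra hux
    have hb := bridge_mem hac hadj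
      ((pth u w).reverse.append ((pth u x).append (pth x w')))
    rw [Walk.edges_append, List.mem_append, Walk.edges_append, List.mem_append,
      Walk.edges_reverse, List.mem_reverse, ← heq] at hb
    tauto
  have h8 : ∀ u x, e ∉ (pth u w).edges → e ∉ (pth x w').edges →
      (pth u x).edges = (pth u w).edges ++ e :: (pth w' x).edges ∧
      (pth u x).support = (pth u w).support ++ (pth w' x).support := by
    intro u x hu hx
    obtain ⟨y, y', heq', _, hed, hsup, hp₁, hp₂⟩ := pth_split hac pth hpth (h5c u x hu hx)
    have hee : s(w, w') = s(y, y') := heq ▸ heq'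
    rw [Sym2.eq_iff] at hee
    rcases hee with ⟨hy, hy'⟩ | ⟨hy, hy'⟩
    · subst hy; subst hy'
      exact ⟨hed, hsup⟩
    · subst hy; subst hy'
      exact (hxor2 u hu hp₁).elim
  have h6 : ∀ u x y, e ∉ (pth x w).edges → e ∉ (pth y w).edges →
      u ∈ (pth x y).support → e ∉ (pth u w).edges := by
    intro u x y hx hy hu hew
    have hxy : e ∉ (pth x y).edges := h5a x y hx hy
    have hsub := path_edges_subset hac (pth u w) (hpth u w)
      (((pth x y).dropUntil u hu).append (pth y w)) e hew
    rw [Walk.edges_append, List.mem_append] at hsub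
    rcases hsub with h | h
    · exact hxy (Walk.edges_dropUntil_subset _ hu h)
    · exact hy h
  have h6b : ∀ u x y, e ∉ (pth x w').edges → e ∉ (pth y w').edges →
      u ∈ (pth x y).support → e ∉ (pth u w').edges := by
    intro u x y hx hy hu hew
    have hxy : e ∉ (pth x y).edges := h5b x y hx hy
    have hsub := path_edges_subset hac (pth u w') (hpth u w')
      (((pth x y).dropUntil u hu).append (pth y w')) e hew
    rw [Walk.edges_append, List.mem_append] at hsub
    rcases hsub with h | h
    · exact hxy (Walk.edges_dropUntil_subset _ hu h)
    · exact hy h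
  have hSA0 : e ∉ (pth (ℓ i₀) w).edges := hn₁
  have hSB0 : e ∉ (pth (ℓ j₀) w').edges := fun h =>
    hn₂ (mem_edges_symm hac pth hpth (ℓ j₀) w' h)
  have hSAi : ∀ i ∈ A, e ∉ (pth (ℓ i) w).edges := by
    intro i hi hcon
    exact hsplitA i₀ hi₀A i hi (h5c (ℓ i₀) (ℓ i) hSA0 (hxor1 (ℓ i) hcon))
  have hSBj : ∀ j ∈ B, e ∉ (pth (ℓ j) w').edges := by
    intro j hj hcon
    exact hsplitB j hj j₀ hj₀B (h5c (ℓ j) (ℓ j₀) (hxor1' (ℓ j) hcon) hSB0)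
  have hSAr : e ∉ (pth r w).edges := by
    intro hcon
    exact hre (mem_edges_symm hac pth hpth (ℓ i₀) r
      (h5c (ℓ i₀) r hSA0 (hxor1 r hcon)))
  -- side facts for the one-sided sets
  have hvA : ∀ (I : Finset (Fin n)), I ⊆ A → ∀ v ∈ TAv pth ℓ w I, e ∉ (pth v w).edges := by
    intro I hIA v hv
    simp only [TAv, mem_biUnion, List.mem_toFinset] at hv
    obtain ⟨i, hi, hvs⟩ := hv
    exact h6 v (ℓ i) w (hSAi i (hIA hi)) hSAw hvs
  have hvB : ∀ (J : Finset (Fin n)), J ⊆ B → ∀ v ∈ TAv pth ℓ w' J, e ∉ (pth v w').edges := by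
    intro J hJB v hv
    simp only [TAv, mem_biUnion, List.mem_toFinset] at hv
    obtain ⟨j, hj, hvs⟩ := hv
    exact h6b v (ℓ j) w' (hSBj j (hJB hj)) hSBw' hvs
  have heA : ∀ (I : Finset (Fin n)), I ⊆ A → ∀ f ∈ TAe pth ℓ w I, ∀ x ∈ f,
      e ∉ (pth x w).edges := by
    intro I hIA f hf x hx
    simp only [TAe, mem_biUnion, List.mem_toFinset] at hf
    obtain ⟨i, hi, hfe⟩ := hf
    exact h6 x (ℓ i) w (hSAi i (hIA hi)) hSAw (mem_support_of_mem_edge _ hfe hx)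
  have heB : ∀ (J : Finset (Fin n)), J ⊆ B → ∀ f ∈ TAe pth ℓ w' J, ∀ x ∈ f,
      e ∉ (pth x w').edges := by
    intro J hJB f hf x hx
    simp only [TAe, mem_biUnion, List.mem_toFinset] at hf
    obtain ⟨j, hj, hfe⟩ := hf
    exact h6b x (ℓ j) w' (hSBj j (hJB hj)) hSBw' (mem_support_of_mem_edge _ hfe hx)
  have hdE : ∀ I J : Finset (Fin n), I ⊆ A → J ⊆ B →
      Disjoint (TAe pth ℓ w I) (TAe pth ℓ w' J) := by
    intro I J hIA hJB
    rw [Finset.disjoint_left]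
    intro f hfA hfB
    induction f with
    | h x y =>
      exact hxor2 x (heA I hIA _ hfA x (by simp)) (heB J hJB _ hfB x (by simp))
  have hdV : ∀ I J : Finset (Fin n), I ⊆ A → J ⊆ B →
      Disjoint (TAv pth ℓ w I) (TAv pth ℓ w' J) := by
    intro I J hIA hJB
    rw [Finset.disjoint_left]
    intro v hvA' hvB'
    exact hxor2 v (hvA I hIA v hvA') (hvB J hJB v hvB')
  have heTA : ∀ I : Finset (Fin n), I ⊆ A → e ∉ TAe pth ℓ w I := by
    intro I hIA hcon
    exact hxor2 w' (heA I hIA e hcon w' (by rw [heq]; simp)) hSBw'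
  have heTB : ∀ J : Finset (Fin n), J ⊆ B → e ∉ TAe pth ℓ w' J := by
    intro J hJB hcon
    exact hxor2 w hSAw (heB J hJB e hcon w (by rw [heq]; simp))
  have hIJd : ∀ I J : Finset (Fin n), I ⊆ A → J ⊆ B → Disjoint I J :=
    fun I J hIA hJB => hdisj.mono hIA hJB
  have hcard2 : ∀ I J : Finset (Fin n), I ⊆ A → I.Nonempty → J ⊆ B → J.Nonempty →
      2 ≤ (I ∪ J).card := by
    intro I J hIA hI hJB hJ
    rw [Finset.card_union_of_disjoint (hIJd I J hIA hJB)]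
    have := hI.card_pos
    have := hJ.card_pos
    omega
  have hEdges : ∀ I J : Finset (Fin n), I ⊆ A → I.Nonempty → J ⊆ B → J.Nonempty →
      spanEdges pth ℓ (I ∪ J) = TAe pth ℓ w I ∪ insert e (TAe pth ℓ w' J) := by
    intro I J hIA hI hJB hJ
    obtain ⟨i₁, hi₁⟩ := hI
    obtain ⟨j₁, hj₁⟩ := hJ
    ext f
    simp only [spanEdges, TAe, mem_biUnion, Finset.mem_union, mem_insert, List.mem_toFinset]
    constructor
    · rintro ⟨k, hk, k', hk', hf⟩
      rcases hk with hk | hk <;> rcases hk' with hk' | hk'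
      · left
        have hsub := path_edges_subset hac (pth (ℓ k) (ℓ k')) (hpth _ _)
          ((pth (ℓ k) w).append ((pth (ℓ k') w).reverse)) f hf
        rw [Walk.edges_append, List.mem_append, Walk.edges_reverse, List.mem_reverse] at hsub
        rcases hsub with h | h
        · exact ⟨k, hk, h⟩
        · exact ⟨k', hk', h⟩
      · have hdec := (h8 (ℓ k) (ℓ k') (hSAi k (hIA hk)) (hSBj k' (hJB hk'))).1
        rw [hdec, List.mem_append, List.mem_cons] at hf
        rcases hf with h | h | h
        · exact Or.inl ⟨k, hk, h⟩
        · exact Or.inr (Or.inl h)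
        · exact Or.inr (Or.inr ⟨k', hk', mem_edges_symm hac pth hpth w' (ℓ k') h⟩)
      · have hf' := mem_edges_symm hac pth hpth (ℓ k) (ℓ k') hf
        have hdec := (h8 (ℓ k') (ℓ k) (hSAi k' (hIA hk')) (hSBj k (hJB hk))).1
        rw [hdec, List.mem_append, List.mem_cons] at hf'
        rcases hf' with h | h | h
        · exact Or.inl ⟨k', hk', h⟩
        · exact Or.inr (Or.inl h)
        · exact Or.inr (Or.inr ⟨k, hk, mem_edges_symm hac pth hpth w' (ℓ k) h⟩)
      · right; right
        have hsub := path_edges_subset hac (pth (ℓ k) (ℓ k')) (hpth _ _)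
          ((pth (ℓ k) w').append ((pth (ℓ k') w').reverse)) f hf
        rw [Walk.edges_append, List.mem_append, Walk.edges_reverse, List.mem_reverse] at hsub
        rcases hsub with h | h
        · exact ⟨k, hk, h⟩
        · exact ⟨k', hk', h⟩
    · rintro (⟨i, hi, hf⟩ | hf | ⟨j, hj, hf⟩)
      · refine ⟨i, Or.inl hi, j₁, Or.inr hj₁, ?_⟩
        rw [(h8 (ℓ i) (ℓ j₁) (hSAi i (hIA hi)) (hSBj j₁ (hJB hj₁))).1]
        exact List.mem_append_left _ hf
      · refine ⟨i₁, Or.inl hi₁, j₁, Or.inr hj₁, ?_⟩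
        rw [hf]
        exact hsplit i₁ (hIA hi₁) j₁ (hJB hj₁)
      · refine ⟨i₁, Or.inl hi₁, j, Or.inr hj, ?_⟩
        rw [(h8 (ℓ i₁) (ℓ j) (hSAi i₁ (hIA hi₁)) (hSBj j (hJB hj))).1]
        exact List.mem_append_right _
          (List.mem_cons_of_mem _ (mem_edges_symm hac pth hpth (ℓ j) w' hf))
  have hVerts : ∀ I J : Finset (Fin n), I ⊆ A → I.Nonempty → J ⊆ B → J.Nonempty →
      spanVerts pth ℓ (I ∪ J) = TAv pth ℓ w I ∪ TAv pth ℓ w' J := by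
    intro I J hIA hI hJB hJ
    obtain ⟨i₁, hi₁⟩ := hI
    obtain ⟨j₁, hj₁⟩ := hJ
    ext v
    simp only [spanVerts, TAv, mem_biUnion, Finset.mem_union, List.mem_toFinset]
    constructor
    · rintro ⟨k, hk, k', hk', hv⟩
      rcases hk with hk | hk <;> rcases hk' with hk' | hk'
      · have hsub := path_support_subset hac (pth (ℓ k) (ℓ k')) (hpth _ _)
          ((pth (ℓ k) w).append ((pth (ℓ k') w).reverse)) v hv
        rw [Walk.mem_support_append_iff, Walk.support_reverse, List.mem_reverse] at hsub
        rcases hsub with h | h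
        · exact Or.inl ⟨k, hk, h⟩
        · exact Or.inl ⟨k', hk', h⟩
      · have hdec := (h8 (ℓ k) (ℓ k') (hSAi k (hIA hk)) (hSBj k' (hJB hk'))).2
        rw [hdec, List.mem_append] at hv
        rcases hv with h | h
        · exact Or.inl ⟨k, hk, h⟩
        · exact Or.inr ⟨k', hk', mem_support_symm hac pth hpth w' (ℓ k') h⟩
      · have hv' := mem_support_symm hac pth hpth (ℓ k) (ℓ k') hv
        have hdec := (h8 (ℓ k') (ℓ k) (hSAi k' (hIA hk')) (hSBj k (hJB hk))).2
        rw [hdec, List.mem_append] at hv'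
        rcases hv' with h | h
        · exact Or.inl ⟨k', hk', h⟩
        · exact Or.inr ⟨k, hk, mem_support_symm hac pth hpth w' (ℓ k) h⟩
      · have hsub := path_support_subset hac (pth (ℓ k) (ℓ k')) (hpth _ _)
          ((pth (ℓ k) w').append ((pth (ℓ k') w').reverse)) v hv
        rw [Walk.mem_support_append_iff, Walk.support_reverse, List.mem_reverse] at hsub
        rcases hsub with h | h
        · exact Or.inr ⟨k, hk, h⟩
        · exact Or.inr ⟨k', hk', h⟩
    · rintro (⟨i, hi, hv⟩ | ⟨j, hj, hv⟩)
      · refine ⟨i, Or.inl hi, j₁, Or.inr hj₁, ?_⟩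
        rw [(h8 (ℓ i) (ℓ j₁) (hSAi i (hIA hi)) (hSBj j₁ (hJB hj₁))).2]
        exact List.mem_append_left _ hv
      · refine ⟨i₁, Or.inl hi₁, j, Or.inr hj, ?_⟩
        rw [(h8 (ℓ i₁) (ℓ j) (hSAi i₁ (hIA hi₁)) (hSBj j (hJB hj))).2]
        exact List.mem_append_right _ (mem_support_symm hac pth hpth (ℓ j) w' hv)
  have hdegA : ∀ I J : Finset (Fin n), I ⊆ A → I.Nonempty → J ⊆ B → J.Nonempty →
      ∀ v ∈ TAv pth ℓ w I, spanDeg pth ℓ (I ∪ J) v = dside pth ℓ w e I v := by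
    intro I J hIA hI hJB hJ v hv
    have hvA' := hvA I hIA v hv
    have hTBf : (TAe pth ℓ w' J).filter (fun f => v ∈ f) = ∅ := by
      rw [Finset.filter_eq_empty_iff]
      intro f hf hvf
      simp only [TAe, mem_biUnion, List.mem_toFinset] at hf
      obtain ⟨j, hj, hfe⟩ := hf
      exact hxor2 v hvA'
        (h6b v (ℓ j) w' (hSBj j (hJB hj)) hSBw' (mem_support_of_mem_edge _ hfe hvf))
    rw [spanDeg, hEdges I J hIA hI hJB hJ, filter_union, filter_insert, hTBf, dside]
    by_cases hve : v ∈ e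
    · rw [if_pos hve, if_pos hve]
      rw [Finset.card_union_of_disjoint]
      · simp
      · simp only [Finset.disjoint_insert_right, Finset.disjoint_empty_right, and_true]
        exact fun hcon => heTA I hIA (Finset.mem_of_mem_filter e hcon)
    · rw [if_neg hve, if_neg hve]
      simp
  have hdegB : ∀ I J : Finset (Fin n), I ⊆ A → I.Nonempty → J ⊆ B → J.Nonempty →
      ∀ v ∈ TAv pth ℓ w' J, spanDeg pth ℓ (I ∪ J) v = dside pth ℓ w' e J v := by
    intro I J hIA hI hJB hJ v hv
    have hvB' := hvB J hJB v hv
    have hTAf : (TAe pth ℓ w I).filter (fun f => v ∈ f) = ∅ := by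
      rw [Finset.filter_eq_empty_iff]
      intro f hf hvf
      simp only [TAe, mem_biUnion, List.mem_toFinset] at hf
      obtain ⟨i, hi, hfe⟩ := hf
      exact hxor2 v
        (h6 v (ℓ i) w (hSAi i (hIA hi)) hSAw (mem_support_of_mem_edge _ hfe hvf)) hvB'
    rw [spanDeg, hEdges I J hIA hI hJB hJ, filter_union, filter_insert, hTAf, dside]
    by_cases hve : v ∈ e
    · rw [if_pos hve, if_pos hve]
      rw [Finset.card_union_of_disjoint (by simp)]
      rw [Finset.card_insert_of_notMem fun hcon => heTB J hJB (Finset.mem_of_mem_filter e hcon)]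
      simp [Nat.add_comm]
    · rw [if_neg hve, if_neg hve]
      simp
  have hRoot : ∀ I J : Finset (Fin n), I ⊆ A → I.Nonempty → J ⊆ B → J.Nonempty →
      (spanVerts pth ℓ (I ∪ J)).filter
          (fun v => ∀ k ∈ I ∪ J, v ∈ (pth r (ℓ k)).support) =
        (TAv pth ℓ w I).filter
          (fun v => (∀ i ∈ I, v ∈ (pth r (ℓ i)).support) ∧ v ∈ (pth r w).support) := by
    intro I J hIA hI hJB hJ
    obtain ⟨i₁, hi₁⟩ := hI
    obtain ⟨j₁, hj₁⟩ := hJ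
    ext v
    simp only [Finset.mem_filter]
    constructor
    · rintro ⟨hv, hcond⟩
      rw [hVerts I J hIA ⟨i₁, hi₁⟩ hJB ⟨j₁, hj₁⟩, Finset.mem_union] at hv
      have hvI : v ∈ TAv pth ℓ w I := by
        rcases hv with hv | hv
        · exact hv
        · exfalso
          have hvB' : e ∉ (pth v w').edges := hvB J hJB v hv
          have hvsup : v ∈ (pth r (ℓ i₁)).support :=
            hcond i₁ (Finset.mem_union_left _ hi₁)
          exact hxor2 v (h6 v r (ℓ i₁) hSAr (hSAi i₁ (hIA hi₁)) hvsup) hvB'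
      refine ⟨hvI, fun i hi => hcond i (Finset.mem_union_left _ hi), ?_⟩
      have hvsup : v ∈ (pth r (ℓ j₁)).support := hcond j₁ (Finset.mem_union_right _ hj₁)
      rw [(h8 r (ℓ j₁) hSAr (hSBj j₁ (hJB hj₁))).2, List.mem_append] at hvsup
      rcases hvsup with h | h
      · exact h
      · exact absurd (h6b v w' (ℓ j₁) hSBw' (hSBj j₁ (hJB hj₁)) h)
          (fun hc => hxor2 v (hvA I hIA v hvI) hc)
    · rintro ⟨hv, hcondI, hvw⟩
      refine ⟨by
        rw [hVerts I J hIA ⟨i₁, hi₁⟩ hJB ⟨j₁, hj₁⟩]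
        exact Finset.mem_union_left _ hv, ?_⟩
      intro k hk
      rw [Finset.mem_union] at hk
      rcases hk with hk | hk
      · exact hcondI k hk
      · rw [(h8 r (ℓ k) hSAr (hSBj k (hJB hk))).2]
        exact List.mem_append_left _ hvw
  have hRootEq : ∀ I J : Finset (Fin n), I ⊆ A → I.Nonempty → J ⊆ B → J.Nonempty →
      spanRoot r pth ℓ (I ∪ J) = spanRoot r pth ℓ (I ∪ J1) :=
    fun I J hIA hI hJB hJ => spanRoot_congr r pth ℓ _ _
      ((hRoot I J hIA hI hJB hJ).trans (hRoot I J1 hIA hI hJ1B hJ1).symm)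
  have hκval : ∀ I J : Finset (Fin n), I ⊆ A → I.Nonempty → J ⊆ B → J.Nonempty →
      κ (I ∪ J) =
        (1 / 4 * (1 - mbar (spanRoot r pth ℓ (I ∪ J1)) ^ 2) *
          (∏ v ∈ (TAv pth ℓ w I).filter (fun v => 2 ≤ dside pth ℓ w e I v),
            mbar v ^ (dside pth ℓ w e I v - 2)) *
          ∏ f ∈ TAe pth ℓ w I, η f) *
        ((∏ v ∈ (TAv pth ℓ w' J).filter (fun v => 2 ≤ dside pth ℓ w' e J v),
            mbar v ^ (dside pth ℓ w' e J v - 2)) *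
          (η e * ∏ f ∈ TAe pth ℓ w' J, η f)) := by
    intro I J hIA hI hJB hJ
    rw [hκ _ (hcard2 I J hIA hI hJB hJ), hRootEq I J hIA hI hJB hJ]
    have hinner : (∏ v ∈ spanInner pth ℓ (I ∪ J), mbar v ^ (spanDeg pth ℓ (I ∪ J) v - 2)) =
        (∏ v ∈ (TAv pth ℓ w I).filter (fun v => 2 ≤ dside pth ℓ w e I v),
          mbar v ^ (dside pth ℓ w e I v - 2)) *
        (∏ v ∈ (TAv pth ℓ w' J).filter (fun v => 2 ≤ dside pth ℓ w' e J v),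
          mbar v ^ (dside pth ℓ w' e J v - 2)) := by
      rw [spanInner, hVerts I J hIA hI hJB hJ, filter_union,
        Finset.prod_union ((hdV I J hIA hJB).mono (filter_subset _ _) (filter_subset _ _))]
      congr 1
      · rw [Finset.filter_congr (fun v hv => by
          rw [hdegA I J hIA hI hJB hJ v hv] : ∀ v ∈ TAv pth ℓ w I,
            2 ≤ spanDeg pth ℓ (I ∪ J) v ↔ 2 ≤ dside pth ℓ w e I v)]
        exact Finset.prod_congr rfl fun v hv => by
          rw [hdegA I J hIA hI hJB hJ v (Finset.mem_of_mem_filter v hv)]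
      · rw [Finset.filter_congr (fun v hv => by
          rw [hdegB I J hIA hI hJB hJ v hv] : ∀ v ∈ TAv pth ℓ w' J,
            2 ≤ spanDeg pth ℓ (I ∪ J) v ↔ 2 ≤ dside pth ℓ w' e J v)]
        exact Finset.prod_congr rfl fun v hv => by
          rw [hdegB I J hIA hI hJB hJ v (Finset.mem_of_mem_filter v hv)]
    have hedge : (∏ f ∈ spanEdges pth ℓ (I ∪ J), η f) =
        (∏ f ∈ TAe pth ℓ w I, η f) * (η e * ∏ f ∈ TAe pth ℓ w' J, η f) := by
      rw [hEdges I J hIA hI hJB hJ,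
        Finset.prod_union (Finset.disjoint_insert_right.mpr ⟨heTA I hIA, hdE I J hIA hJB⟩),
        Finset.prod_insert (heTB J hJB)]
    rw [hinner, hedge]
    ring
  rw [hκval I1 J1 hI1A hI1 hJ1B hJ1, hκval I2 J2 hI2A hI2 hJ2B hJ2,
    hκval I1 J2 hI1A hI1 hJ2B hJ2, hκval I2 J1 hI2A hI2 hJ1B hJ1]
  ring

end EdgeSplitAux

/-- For a trivalent tree `T` rooted at `r` with leaves `ℓ : Fin n → V`,
the monomial parametrization
`κ_I = ¼(1−μ̄_{r(I)}²) ∏_{v ∈ int(V(I))} μ̄_v^{deg v − 2} ∏_{e ∈ E(I)} η_e`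
satisfies, for every edge split `A|B` and nonempty `I₁, I₂ ⊆ A`, `J₁, J₂ ⊆ B`,
the quadratic relations `κ_{I₁∪J₁} κ_{I₂∪J₂} = κ_{I₁∪J₂} κ_{I₂∪J₁}`. -/
theorem edge_split_invariants (G : SimpleGraph V) [DecidableRel G.Adj] (hT : G.IsTree)
    (r : V) {n : ℕ} (ℓ : Fin n → V) (hinj : Function.Injective ℓ)
    (hleaf : ∀ i, G.degree (ℓ i) = 1)
    (hleaf' : ∀ v, G.degree v = 1 → ∃ i, ℓ i = v)
    (htrivalent : ∀ v : V, G.degree v = 1 ∨ G.degree v = 3)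
    (pth : ∀ u v : V, G.Walk u v) (hpth : ∀ u v, (pth u v).IsPath)
    (mbar : V → ℝ) (hmbar : ∀ v, mbar v ∈ Set.Icc (-1 : ℝ) 1)
    (η : Sym2 V → ℝ)
    (κ : Finset (Fin n) → ℝ)
    (hκ : ∀ I : Finset (Fin n), 2 ≤ I.card →
      κ I = 1 / 4 * (1 - mbar (spanRoot r pth ℓ I) ^ 2) *
        (∏ v ∈ spanInner pth ℓ I, mbar v ^ (spanDeg pth ℓ I v - 2)) *
        ∏ e ∈ spanEdges pth ℓ I, η e)
    (e : Sym2 V) (he : e ∈ G.edgeSet)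
    (A B : Finset (Fin n)) (hA : A.Nonempty) (hB : B.Nonempty)
    (hAB : A ∪ B = Finset.univ) (hdisj : Disjoint A B)
    (hsplit : ∀ i ∈ A, ∀ j ∈ B, e ∈ (pth (ℓ i) (ℓ j)).edges)
    (hsplitA : ∀ i ∈ A, ∀ j ∈ A, e ∉ (pth (ℓ i) (ℓ j)).edges)
    (hsplitB : ∀ i ∈ B, ∀ j ∈ B, e ∉ (pth (ℓ i) (ℓ j)).edges)
    (I1 I2 J1 J2 : Finset (Fin n))
    (hI1 : I1.Nonempty) (hI2 : I2.Nonempty) (hJ1 : J1.Nonempty) (hJ2 : J2.Nonempty)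
    (hI1A : I1 ⊆ A) (hI2A : I2 ⊆ A) (hJ1B : J1 ⊆ B) (hJ2B : J2 ⊆ B) :
    κ (I1 ∪ J1) * κ (I2 ∪ J2) = κ (I1 ∪ J2) * κ (I2 ∪ J1) := by
  obtain ⟨a, ha⟩ := hA
  obtain ⟨b, hb⟩ := hB
  have hac : G.IsAcyclic := hT.IsAcyclic
  by_cases hr : e ∈ (pth r (ℓ a)).edges
  · have hrB : e ∉ (pth r (ℓ b)).edges :=
      fun h2 => not_both hac pth hpth r (ℓ a) (ℓ b) (hsplit a ha b hb) hr h2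
    have hswap : ∀ j ∈ B, ∀ i ∈ A, e ∈ (pth (ℓ j) (ℓ i)).edges :=
      fun j hj i hi => mem_edges_symm hac pth hpth (ℓ i) (ℓ j) (hsplit i hi j hj)
    have h := aux_factor hT r ℓ pth hpth mbar η κ hκ e B A hdisj.symm
      hswap hsplitB hsplitA J1 J2 I1 I2 hJ1 hJ2 hI1 hI2 hJ1B hJ2B hI1A hI2A ⟨b, hb, hrB⟩
    rw [Finset.union_comm I1 J1, Finset.union_comm I2 J2, Finset.union_comm I1 J2,
      Finset.union_comm I2 J1, h]
    ring
  · exact aux_factor hT r ℓ pth hpth mbar η κ hκ e A B hdisj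
      hsplit hsplitA hsplitB I1 I2 J1 J2 hI1 hI2 hJ1 hJ2 hI1A hI2A hJ1B hJ2B ⟨a, ha, hr⟩
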